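/- Let W be a matrix weight of size N on a finite interval (a,b), let {P_n} be its sequence of monic orthogonal polynomials, and let M₀ = ∫_a^b W(x) dx be its zeroth moment. Then C_ℝ(W) = {T ∈ Mat_N(ℂ) : T W(x) = W(x) T* for a.e. x} coincides with the set { T ∈ Mat_N(ℂ) : T M₀ = M₀ T* and T P_n(x) = P_n(x) T for all n ∈ ℕ and all x }. -/

import Mathlib

open MeasureTheory Matrix
open scoped ComplexOrder

noncomputable section

/-- The set of real points strictly between the extended-real endpoints `a` and `b`. -/
def weightSupport (a b : EReal) : Set ℝ := {x : ℝ | a < (x : EReal) ∧ (x : EReal) < b}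

variable {I : Type} [Fintype I] [DecidableEq I]
variable {I' : Type} [Fintype I'] [DecidableEq I']

/-- Entrywise integral of a matrix-valued function over a set. -/
def matIntegral (S : Set ℝ) (F : ℝ → Matrix I I ℂ) : Matrix I I ℂ :=
  Matrix.of fun i j => ∫ x in S, F x i j

/-- `W` is a matrix weight on the (nondegenerate) interval `(a,b)`. -/
def IsMatrixWeight (a b : EReal) (W : ℝ → Matrix I I ℂ) : Prop :=
  a < b ∧
  (∀ x ∈ weightSupport a b, (W x).PosSemidef) ∧
  (∀ᵐ x : ℝ ∂(volume.restrict (weightSupport a b)), (W x).PosDef) ∧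
  (∀ n : ℕ, ∀ i j, IntegrableOn (fun x : ℝ => (x : ℂ) ^ n * W x i j) (weightSupport a b))

/-- Equivalence of matrix weights: `W' = M W M*` for a nonsingular `M`. -/
def WeightEquiv (a b : EReal) (W : ℝ → Matrix I I ℂ) (W' : ℝ → Matrix I' I' ℂ) : Prop :=
  ∃ (M : Matrix I' I ℂ) (M' : Matrix I I' ℂ), M * M' = 1 ∧ M' * M = 1 ∧
    ∀ x ∈ weightSupport a b, W' x = M * W x * Mᴴ

/-- Unitary equivalence of matrix weights. -/
def UnitaryWeightEquiv (a b : EReal) (W : ℝ → Matrix I I ℂ) (W' : ℝ → Matrix I' I' ℂ) : Prop :=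
  ∃ M : Matrix I' I ℂ, M * Mᴴ = 1 ∧ Mᴴ * M = 1 ∧
    ∀ x ∈ weightSupport a b, W' x = M * W x * Mᴴ

/-- `W` reduces: it is equivalent to a direct sum of two matrix weights of smaller size. -/
def Reduces (a b : EReal) (W : ℝ → Matrix I I ℂ) : Prop :=
  ∃ (N₁ N₂ : ℕ) (W₁ : ℝ → Matrix (Fin N₁) (Fin N₁) ℂ) (W₂ : ℝ → Matrix (Fin N₂) (Fin N₂) ℂ),
    0 < N₁ ∧ 0 < N₂ ∧ N₁ + N₂ = Fintype.card I ∧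
    IsMatrixWeight a b W₁ ∧ IsMatrixWeight a b W₂ ∧
    WeightEquiv a b W (fun x => Matrix.fromBlocks (W₁ x) 0 0 (W₂ x))

/-- The real vector space `C_ℝ` of a matrix weight. -/
def CR (a b : EReal) (W : ℝ → Matrix I I ℂ) : Set (Matrix I I ℂ) :=
  {T | ∀ᵐ x ∂(volume.restrict (weightSupport a b)), T * W x = W x * Tᴴ}

/-- Evaluation of a matrix polynomial at a real point. -/
def polyEval (p : Polynomial (Matrix I I ℂ)) (x : ℝ) : Matrix I I ℂ :=
  p.eval ((x : ℂ) • (1 : Matrix I I ℂ))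

/-- A sequence of orthogonal polynomials with respect to `W`:  `Q n` has degree `n` with
nonsingular leading coefficient, and distinct members are orthogonal. -/
def IsOPS (a b : EReal) (W : ℝ → Matrix I I ℂ) (Q : ℕ → Polynomial (Matrix I I ℂ)) : Prop :=
  (∀ n, (Q n).natDegree = n ∧ IsUnit ((Q n).coeff n)) ∧
  ∀ n m, n ≠ m →
    matIntegral (weightSupport a b) (fun x => polyEval (Q n) x * W x * (polyEval (Q m) x)ᴴ) = 0

/-- The sequence of monic orthogonal polynomials with respect to `W`. -/
def IsMonicOPS (a b : EReal) (W : ℝ → Matrix I I ℂ) (P : ℕ → Polynomial (Matrix I I ℂ)) : Prop :=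
  (∀ n, (P n).Monic ∧ (P n).natDegree = n) ∧
  ∀ n m, n ≠ m →
    matIntegral (weightSupport a b) (fun x => polyEval (P n) x * W x * (polyEval (P m) x)ᴴ) = 0

end

namespace S12
open Polynomial

variable {N : ℕ}

local notation "Mat" => Matrix (Fin N) (Fin N) ℂ

lemma weightSupport_coe (a b : ℝ) : weightSupport (a : EReal) (b : EReal) = Set.Ioo a b := by
  ext x
  simp [weightSupport, Set.mem_Ioo, EReal.coe_lt_coe_iff]

lemma polyEval_apply (p : Polynomial Mat) {n : ℕ} (hn : p.natDegree < n) (x : ℝ) :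
    polyEval p x = ∑ k ∈ Finset.range n, (x : ℂ) ^ k • p.coeff k := by
  unfold polyEval
  rw [Polynomial.eval_eq_sum_range' hn]
  refine Finset.sum_congr rfl fun k _ => ?_
  rw [_root_.smul_pow, one_pow, mul_smul_comm, mul_one]

lemma polyEval_add (p q : Polynomial Mat) (x : ℝ) :
    polyEval (p + q) x = polyEval p x + polyEval q x := Polynomial.eval_add

lemma polyEval_sub (p q : Polynomial Mat) (x : ℝ) :
    polyEval (p - q) x = polyEval p x - polyEval q x := Polynomial.eval_sub _ _ _

lemma polyEval_C_mul (A : Mat) (p : Polynomial Mat) (x : ℝ) :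
    polyEval (C A * p) x = A * polyEval p x := Polynomial.eval_C_mul

lemma polyEval_one (x : ℝ) : polyEval (1 : Polynomial Mat) x = 1 := Polynomial.eval_one

lemma polyEval_zero (x : ℝ) : polyEval (0 : Polynomial Mat) x = 0 := Polynomial.eval_zero

lemma polyEval_finset_sum {ι : Type*} (s : Finset ι) (f : ι → Polynomial Mat) (x : ℝ) :
    polyEval (∑ k ∈ s, f k) x = ∑ k ∈ s, polyEval (f k) x := Polynomial.eval_finset_sum _ _ _

lemma polyEval_monomial (n : ℕ) (A : Mat) (x : ℝ) :
    polyEval (monomial n A) x = (x : ℂ) ^ n • A := by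
  unfold polyEval
  rw [Polynomial.eval_monomial, _root_.smul_pow, one_pow, mul_smul_comm, mul_one]

lemma polyEval_mul_C (p : Polynomial Mat) (A : Mat) (x : ℝ) :
    polyEval (p * C A) x = polyEval p x * A := by
  induction p using Polynomial.induction_on' with
  | add p q hp hq => rw [add_mul, polyEval_add, hp, hq, polyEval_add, add_mul]
  | monomial n B =>
      rw [Polynomial.monomial_mul_C, polyEval_monomial, polyEval_monomial, smul_mul_assoc]


/-! ### matIntegral lemmas -/

lemma matIntegral_congr_ae {S : Set ℝ} {F G : ℝ → Mat}
    (h : ∀ᵐ x ∂(volume.restrict S), F x = G x) : matIntegral S F = matIntegral S G := by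
  ext i j
  exact integral_congr_ae (h.mono fun x hx => by simp only [hx])

lemma matIntegral_add {S : Set ℝ} {F G : ℝ → Mat}
    (hF : ∀ i j, IntegrableOn (fun x => F x i j) S)
    (hG : ∀ i j, IntegrableOn (fun x => G x i j) S) :
    matIntegral S (fun x => F x + G x) = matIntegral S F + matIntegral S G := by
  ext i j
  simpa [matIntegral] using integral_add (hF i j) (hG i j)

lemma matIntegral_sub {S : Set ℝ} {F G : ℝ → Mat}
    (hF : ∀ i j, IntegrableOn (fun x => F x i j) S)
    (hG : ∀ i j, IntegrableOn (fun x => G x i j) S) :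
    matIntegral S (fun x => F x - G x) = matIntegral S F - matIntegral S G := by
  ext i j
  simpa [matIntegral] using integral_sub (hF i j) (hG i j)

lemma matIntegral_const_mul {S : Set ℝ} {F : ℝ → Mat}
    (hF : ∀ i j, IntegrableOn (fun x => F x i j) S) (A : Mat) :
    matIntegral S (fun x => A * F x) = A * matIntegral S F := by
  ext i j
  have h1 : ∀ x, (A * F x) i j = ∑ k, A i k * F x k j := fun x => Matrix.mul_apply
  calc (matIntegral S fun x => A * F x) i j
      = ∫ x in S, ∑ k, A i k * F x k j := by
        refine integral_congr_ae (Filter.Eventually.of_forall fun x => h1 x)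
    _ = ∑ k, ∫ x in S, A i k * F x k j :=
        integral_finset_sum _ (fun k _ => (hF k j).const_mul _)
    _ = ∑ k, A i k * ∫ x in S, F x k j := by
        refine Finset.sum_congr rfl fun k _ => integral_const_mul _ _
    _ = (A * matIntegral S F) i j := by simp [matIntegral, Matrix.mul_apply]

lemma matIntegral_mul_const {S : Set ℝ} {F : ℝ → Mat}
    (hF : ∀ i j, IntegrableOn (fun x => F x i j) S) (A : Mat) :
    matIntegral S (fun x => F x * A) = matIntegral S F * A := by
  ext i j
  calc (matIntegral S fun x => F x * A) i j
      = ∫ x in S, ∑ k, F x i k * A k j := by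
        refine integral_congr_ae (Filter.Eventually.of_forall fun x => Matrix.mul_apply)
    _ = ∑ k, ∫ x in S, F x i k * A k j :=
        integral_finset_sum _ (fun k _ => (hF i k).mul_const _)
    _ = ∑ k, (∫ x in S, F x i k) * A k j := by
        refine Finset.sum_congr rfl fun k _ => integral_mul_const _ _
    _ = (matIntegral S F * A) i j := by simp [matIntegral, Matrix.mul_apply]

lemma integrableOn_const_mul_mat {S : Set ℝ} {F : ℝ → Mat}
    (h : ∀ i j, IntegrableOn (fun x => F x i j) S) (A : Mat) :
    ∀ i j, IntegrableOn (fun x : ℝ => ((A * F x : Mat)) i j) S := by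
  intro i j
  have hfun : (fun x : ℝ => ((A * F x : Mat)) i j) = fun x => ∑ k, A i k * F x k j := by
    funext x; simp [Matrix.mul_apply]
  rw [hfun]
  exact MeasureTheory.integrable_finset_sum _ fun k _ => (h k j).const_mul _

lemma matIntegral_finset_sum {S : Set ℝ} {ι : Type*} (s : Finset ι) {F : ι → ℝ → Mat}
    (hF : ∀ k ∈ s, ∀ i j, IntegrableOn (fun x => F k x i j) S) :
    matIntegral S (fun x => ∑ k ∈ s, F k x) = ∑ k ∈ s, matIntegral S (F k) := by
  ext i j
  calc (matIntegral S fun x => ∑ k ∈ s, F k x) i j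
      = ∫ x in S, ∑ k ∈ s, F k x i j := by
        refine integral_congr_ae (Filter.Eventually.of_forall fun x => ?_)
        simp [matIntegral, Matrix.sum_apply]
    _ = ∑ k ∈ s, ∫ x in S, F k x i j := integral_finset_sum _ (fun k hk => hF k hk i j)
    _ = (∑ k ∈ s, matIntegral S (F k)) i j := by simp [matIntegral, Matrix.sum_apply]


/-! ### Integrability lemmas -/

section Weight
variable {a b : ℝ} {W : ℝ → Matrix (Fin N) (Fin N) ℂ}

lemma integrableOn_smul_mul_mul
    (hWint : ∀ (n : ℕ), ∀ (i j : Fin N),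
      IntegrableOn (fun x : ℝ => (x:ℂ)^n * W x i j) (Set.Ioo a b))
    (n : ℕ) (A B : Mat) (i j : Fin N) :
    IntegrableOn (fun x : ℝ => (((x:ℂ)^n • (A * W x * B) : Mat)) i j) (Set.Ioo a b) := by
  have hfun : (fun x : ℝ => (((x:ℂ)^n • (A * W x * B) : Mat)) i j)
      = fun x : ℝ => ∑ k, ∑ l, (A i l * B k j) * ((x:ℂ)^n * W x l k) := by
    funext x
    simp only [Matrix.smul_apply, smul_eq_mul, Matrix.mul_apply]
    rw [Finset.mul_sum]
    refine Finset.sum_congr rfl fun k _ => ?_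
    rw [Finset.sum_mul, Finset.mul_sum]
    refine Finset.sum_congr rfl fun l _ => by ring
  rw [hfun]
  apply MeasureTheory.integrable_finset_sum
  intro k _
  apply MeasureTheory.integrable_finset_sum
  intro l _
  exact (hWint n l k).const_mul _

lemma integrableOn_polyEval_mul
    (hWint : ∀ (n : ℕ), ∀ (i j : Fin N),
      IntegrableOn (fun x : ℝ => (x:ℂ)^n * W x i j) (Set.Ioo a b))
    (p q : Polynomial Mat) (i j : Fin N) :
    IntegrableOn (fun x : ℝ => ((polyEval p x * W x * (polyEval q x)ᴴ : Mat)) i j) (Set.Ioo a b) := by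
  have hfun : (fun x : ℝ => ((polyEval p x * W x * (polyEval q x)ᴴ : Mat)) i j)
      = fun x : ℝ => ∑ d ∈ Finset.range (p.natDegree+1), ∑ e ∈ Finset.range (q.natDegree+1),
          (((x:ℂ)^(d+e) • (p.coeff d * W x * (q.coeff e)ᴴ) : Mat)) i j := by
    funext x
    rw [polyEval_apply p (Nat.lt_succ_self _), polyEval_apply q (Nat.lt_succ_self _)]
    simp only [Matrix.conjTranspose_sum, Matrix.conjTranspose_smul, star_pow,
      Complex.star_def, Complex.conj_ofReal, Finset.sum_mul, Finset.mul_sum,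
      Matrix.sum_apply, smul_mul_assoc, mul_smul_comm, Finset.smul_sum, smul_smul, pow_add]
    rw [Finset.sum_comm]
    refine Finset.sum_congr rfl fun e _ => Finset.sum_congr rfl fun d _ => ?_
    rw [mul_comm]
  rw [hfun]
  apply MeasureTheory.integrable_finset_sum
  intro d _
  apply MeasureTheory.integrable_finset_sum
  intro e _
  exact integrableOn_smul_mul_mul hWint (d+e) _ _ i j

lemma integrableOn_mul_mul
    (hWint : ∀ (n : ℕ), ∀ (i j : Fin N),
      IntegrableOn (fun x : ℝ => (x:ℂ)^n * W x i j) (Set.Ioo a b))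
    (A B : Mat) (i j : Fin N) :
    IntegrableOn (fun x : ℝ => ((A * W x * B : Mat)) i j) (Set.Ioo a b) := by
  simpa using integrableOn_smul_mul_mul hWint 0 A B i j


lemma isUnit_matIntegral_sq
    (hab : a < b)
    (hpos : ∀ᵐ x ∂(volume.restrict (Set.Ioo a b)), (W x).PosDef)
    (hWint : ∀ (n : ℕ), ∀ (i j : Fin N),
      IntegrableOn (fun x : ℝ => (x:ℂ)^n * W x i j) (Set.Ioo a b))
    {p : Polynomial Mat} (hp : p.Monic) :
    IsUnit (matIntegral (Set.Ioo a b)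
      (fun x => polyEval p x * W x * (polyEval p x)ᴴ)) := by
  set G : ℝ → Mat := fun x => polyEval p x * W x * (polyEval p x)ᴴ with hG
  set S : Mat := matIntegral (Set.Ioo a b) G with hS
  have hint : ∀ i j, IntegrableOn (fun x : ℝ => G x i j) (Set.Ioo a b) :=
    integrableOn_polyEval_mul hWint p p
  rw [Matrix.isUnit_iff_isUnit_det, isUnit_iff_ne_zero]
  intro hdet
  obtain ⟨v, hv, hvS⟩ := Matrix.exists_mulVec_eq_zero_iff.mpr hdet
  -- the quadratic form as an integral
  set h : ℝ → ℂ := fun x => star v ⬝ᵥ (G x).mulVec v with hh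
  have hfun : h = fun x => ∑ i, ∑ j, star v i * (G x i j * v j) := by
    funext x
    simp [hh, dotProduct, Matrix.mulVec, Finset.mul_sum]
  have hhint : IntegrableOn h (Set.Ioo a b) := by
    rw [hfun]
    refine MeasureTheory.integrable_finset_sum _ fun i _ => ?_
    refine MeasureTheory.integrable_finset_sum _ fun j _ => ?_
    exact ((hint i j).mul_const _).const_mul _
  have hIntEq : ∫ x in Set.Ioo a b, h x = star v ⬝ᵥ S.mulVec v := by
    rw [hfun]
    rw [MeasureTheory.integral_finset_sum _ (fun i _ =>
      MeasureTheory.integrable_finset_sum _ (fun j _ => ((hint i j).mul_const _).const_mul _))]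
    have : ∀ i, (∫ x in Set.Ioo a b, ∑ j, star v i * (G x i j * v j))
        = ∑ j, star v i * ((∫ x in Set.Ioo a b, G x i j) * v j) := by
      intro i
      rw [MeasureTheory.integral_finset_sum _ (fun j _ => ((hint i j).mul_const _).const_mul _)]
      refine Finset.sum_congr rfl fun j _ => ?_
      rw [integral_const_mul, integral_mul_const]
    simp only [this]
    simp [hS, dotProduct, Matrix.mulVec, matIntegral, Finset.mul_sum]
  have hIzero : ∫ x in Set.Ioo a b, h x = 0 := by
    rw [hIntEq, hvS]
    simp
  -- pointwise positivity
  obtain ⟨i0, hi0'⟩ := Function.ne_iff.mp hv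
  have hi0 : v i0 ≠ 0 := by simpa using hi0'
  set ψ : Polynomial ℂ := ∑ d ∈ Finset.range (p.natDegree + 1),
    Polynomial.C (((p.coeff d)ᴴ.mulVec v) i0) * Polynomial.X ^ d with hψ
  have hψcoeff : ψ.coeff p.natDegree = v i0 := by
    rw [hψ]
    rw [Polynomial.finset_sum_coeff]
    rw [Finset.sum_eq_single p.natDegree]
    · rw [Polynomial.coeff_C_mul, Polynomial.coeff_X_pow, if_pos rfl, mul_one]
      rw [hp.coeff_natDegree]
      simp [Matrix.mulVec, dotProduct, Matrix.one_apply, apply_ite, Finset.sum_ite_eq']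
    · intro d _ hd
      rw [Polynomial.coeff_C_mul, Polynomial.coeff_X_pow, if_neg (Ne.symm hd), mul_zero]
    · intro hmem
      exact absurd (Finset.self_mem_range_succ p.natDegree) hmem
  have hψne : ψ ≠ 0 := fun hz => hi0 (by simpa [hz] using hψcoeff.symm)
  have hueval : ∀ x : ℝ, ((polyEval p x)ᴴ.mulVec v) i0 = ψ.eval (x : ℂ) := by
    intro x
    rw [polyEval_apply p (Nat.lt_succ_self _), hψ]
    simp only [Polynomial.eval_finset_sum, Polynomial.eval_mul, Polynomial.eval_C,
      Polynomial.eval_pow, Polynomial.eval_X, Matrix.mulVec, dotProduct,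
      Matrix.conjTranspose_apply, Matrix.sum_apply, Matrix.smul_apply, star_sum, star_smul,
      smul_eq_mul, star_pow, Complex.star_def, Complex.conj_ofReal, Finset.sum_mul]
    rw [Finset.sum_comm]
    refine Finset.sum_congr rfl fun d _ => Finset.sum_congr rfl fun j _ => ?_
    simp only [_root_.map_mul, ← Complex.ofReal_pow, Complex.conj_ofReal]
    ring
  have hroots : ∀ᵐ x : ℝ ∂(volume.restrict (Set.Ioo a b)), ψ.eval (x:ℂ) ≠ 0 := by
    have hfin : {x : ℝ | ψ.eval (x:ℂ) = 0}.Finite := by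
      have hfin0 := Polynomial.finite_setOf_isRoot hψne
      have heq2 : {x : ℝ | ψ.eval (x:ℂ) = 0}
          = (fun x : ℝ => (x : ℂ)) ⁻¹' {z : ℂ | ψ.IsRoot z} := rfl
      rw [heq2]
      exact Set.Finite.preimage (fun x _ y _ hxy => by exact_mod_cast hxy) hfin0
    refine ae_restrict_of_ae ?_
    have hz := hfin.measure_zero (volume)
    rw [← MeasureTheory.compl_mem_ae_iff] at hz
    exact hz
  have hpos' : ∀ᵐ x ∂(volume.restrict (Set.Ioo a b)), 0 < (h x).re := by
    filter_upwards [hpos, hroots] with x hx1 hx2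
    have hu : (polyEval p x)ᴴ.mulVec v ≠ 0 := by
      intro hz
      exact hx2 (by rw [← hueval x, hz]; rfl)
    have := hx1.dotProduct_mulVec_pos hu
    have heq : h x = star ((polyEval p x)ᴴ.mulVec v) ⬝ᵥ
        (W x).mulVec ((polyEval p x)ᴴ.mulVec v) := by
      show star v ⬝ᵥ (polyEval p x * W x * (polyEval p x)ᴴ) *ᵥ v = _
      rw [Matrix.star_mulVec, Matrix.conjTranspose_conjTranspose,
        ← Matrix.dotProduct_mulVec, Matrix.mulVec_mulVec, Matrix.mulVec_mulVec]
    rw [heq]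
    rw [Complex.lt_def] at this
    exact this.1
  -- contradiction
  have hre0 : ∫ x in Set.Ioo a b, (h x).re = 0 := by
    have := integral_re hhint (f := h)
    rw [hIzero] at this
    simpa using this
  have hnonneg : 0 ≤ᵐ[volume.restrict (Set.Ioo a b)] fun x => (h x).re :=
    hpos'.mono fun x hx => hx.le
  have hzero := (MeasureTheory.integral_eq_zero_iff_of_nonneg_ae hnonneg hhint.re).mp hre0
  have hfalse : ∀ᵐ x ∂(volume.restrict (Set.Ioo a b)), False := by
    filter_upwards [hpos', hzero] with x hx1 hx2
    rw [Pi.zero_apply] at hx2  -- hx2 : h x re = 0?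
    exact absurd hx2 (ne_of_gt hx1)
  rw [Filter.eventually_false_iff_eq_bot, MeasureTheory.ae_eq_bot,
    MeasureTheory.Measure.restrict_eq_zero] at hfalse
  rw [Real.volume_Ioo, ENNReal.ofReal_eq_zero] at hfalse
  linarith

end Weight

/-! ### Expansion in the monic OPS basis -/

lemma polyEval_C (A : Mat) (x : ℝ) : polyEval (Polynomial.C A) x = A := Polynomial.eval_C

lemma P0_eq_one {P : ℕ → Polynomial (Matrix (Fin N) (Fin N) ℂ)}
    (hmon : ∀ n, (P n).Monic ∧ (P n).natDegree = n) : P 0 = 1 := by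
  have h2 := (hmon 0).2
  have hC := Polynomial.eq_C_of_natDegree_le_zero (le_of_eq h2)
  have hc : (P 0).coeff 0 = 1 := by
    have := (hmon 0).1.coeff_natDegree
    rwa [h2] at this
  rw [hC, hc, Polynomial.C_1]

lemma expand_aux {P : ℕ → Polynomial (Matrix (Fin N) (Fin N) ℂ)}
    (hmon : ∀ n, (P n).Monic ∧ (P n).natDegree = n) :
    ∀ (m : ℕ) (r : Polynomial (Matrix (Fin N) (Fin N) ℂ)), r.natDegree ≤ m →
      ∃ A : ℕ → Matrix (Fin N) (Fin N) ℂ,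
        r = ∑ k ∈ Finset.range (m+1), Polynomial.C (A k) * P k := by
  intro m
  induction m with
  | zero =>
      intro r hr
      refine ⟨fun _ => r.coeff 0, ?_⟩
      rw [Finset.sum_range_one, P0_eq_one hmon, mul_one]
      exact Polynomial.eq_C_of_natDegree_le_zero hr
  | succ m ih =>
      intro r hr
      have hmono := (hmon (m+1)).1
      have hdeg := (hmon (m+1)).2
      set r' : Polynomial (Matrix (Fin N) (Fin N) ℂ)
        := r - Polynomial.C (r.coeff (m+1)) * P (m+1) with hr'def
      have hr' : r'.natDegree ≤ m := by
        rw [Polynomial.natDegree_le_iff_coeff_eq_zero]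
        intro k hk
        rw [hr'def, Polynomial.coeff_sub, Polynomial.coeff_C_mul]
        rcases eq_or_lt_of_le (Nat.succ_le_of_lt hk) with hk' | hk'
        · rw [← hk']
          have h1 : (P (m+1)).coeff (m+1) = 1 := by
            have := hmono.coeff_natDegree
            rwa [hdeg] at this
          rw [h1, mul_one, sub_self]
        · have h1 : r.coeff k = 0 :=
            Polynomial.coeff_eq_zero_of_natDegree_lt (lt_of_le_of_lt hr hk')
          have h2 : (P (m+1)).coeff k = 0 :=
            Polynomial.coeff_eq_zero_of_natDegree_lt (by rw [hdeg]; exact hk')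
          rw [h1, h2, mul_zero, sub_self]
      obtain ⟨A', hA'⟩ := ih r' hr'
      refine ⟨fun k => if k = m+1 then r.coeff (m+1) else A' k, ?_⟩
      rw [Finset.sum_range_succ]
      have hsum : ∑ k ∈ Finset.range (m+1),
            Polynomial.C (if k = m+1 then r.coeff (m+1) else A' k) * P k
          = ∑ k ∈ Finset.range (m+1), Polynomial.C (A' k) * P k := by
        refine Finset.sum_congr rfl fun k hk => ?_
        rw [if_neg (Finset.mem_range.mp hk).ne]
      rw [hsum, ← hA', hr'def]
      simp

/-! ### Orthogonality to lower-degree polynomials -/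

section Ortho
variable {a b : ℝ} {W : ℝ → Matrix (Fin N) (Fin N) ℂ}
  {P : ℕ → Polynomial (Matrix (Fin N) (Fin N) ℂ)}

lemma ortho_right
    (hWint : ∀ (n : ℕ), ∀ (i j : Fin N),
      IntegrableOn (fun x : ℝ => (x:ℂ)^n * W x i j) (Set.Ioo a b))
    (hmon : ∀ n, (P n).Monic ∧ (P n).natDegree = n)
    (horth : ∀ n m, n ≠ m → matIntegral (Set.Ioo a b)
      (fun x => polyEval (P n) x * W x * (polyEval (P m) x)ᴴ) = 0)
    (n : ℕ) (q : Polynomial (Matrix (Fin N) (Fin N) ℂ)) (hq : q.natDegree < n) :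
    matIntegral (Set.Ioo a b) (fun x => polyEval (P n) x * W x * (polyEval q x)ᴴ) = 0 := by
  obtain ⟨B, hB⟩ := expand_aux hmon q.natDegree q le_rfl
  have hfun : (fun x : ℝ => polyEval (P n) x * W x * (polyEval q x)ᴴ)
      = fun x : ℝ => ∑ k ∈ Finset.range (q.natDegree + 1),
          (polyEval (P n) x * W x * (polyEval (P k) x)ᴴ) * (B k)ᴴ := by
    funext x
    conv_lhs => rw [hB]
    rw [polyEval_finset_sum, Matrix.conjTranspose_sum, Finset.mul_sum]
    refine Finset.sum_congr rfl fun k hk => ?_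
    rw [polyEval_C_mul, Matrix.conjTranspose_mul, ← mul_assoc]
  rw [hfun, matIntegral_finset_sum _ (fun k hk i j => by
    have h1 := integrableOn_polyEval_mul hWint (P n) (Polynomial.C (B k) * P k) i j
    refine h1.congr_fun ?_ measurableSet_Ioo
    intro x hx
    simp only [polyEval_C_mul, Matrix.conjTranspose_mul, ← mul_assoc])]
  refine Finset.sum_eq_zero fun k hk => ?_
  have hk' : n ≠ k := by
    have := Finset.mem_range.mp hk
    omega
  rw [matIntegral_mul_const (fun i j => integrableOn_polyEval_mul hWint (P n) (P k) i j) _,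
    horth n k hk', zero_mul]

lemma ortho_left
    (hWint : ∀ (n : ℕ), ∀ (i j : Fin N),
      IntegrableOn (fun x : ℝ => (x:ℂ)^n * W x i j) (Set.Ioo a b))
    (hmon : ∀ n, (P n).Monic ∧ (P n).natDegree = n)
    (horth : ∀ n m, n ≠ m → matIntegral (Set.Ioo a b)
      (fun x => polyEval (P n) x * W x * (polyEval (P m) x)ᴴ) = 0)
    (m : ℕ) (p : Polynomial (Matrix (Fin N) (Fin N) ℂ)) (hp : p.natDegree < m) :
    matIntegral (Set.Ioo a b) (fun x => polyEval p x * W x * (polyEval (P m) x)ᴴ) = 0 := by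
  obtain ⟨A, hA⟩ := expand_aux hmon p.natDegree p le_rfl
  have hfun : (fun x : ℝ => polyEval p x * W x * (polyEval (P m) x)ᴴ)
      = fun x : ℝ => ∑ k ∈ Finset.range (p.natDegree + 1),
          A k * (polyEval (P k) x * W x * (polyEval (P m) x)ᴴ) := by
    funext x
    conv_lhs => rw [hA]
    rw [polyEval_finset_sum, Finset.sum_mul, Finset.sum_mul]
    refine Finset.sum_congr rfl fun k hk => ?_
    simp only [polyEval_C_mul, mul_assoc]
  rw [hfun, matIntegral_finset_sum _ (fun k hk i j => by
    have h1 := integrableOn_polyEval_mul hWint (Polynomial.C (A k) * P k) (P m) i j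
    refine h1.congr_fun ?_ measurableSet_Ioo
    intro x hx
    simp only [polyEval_C_mul, mul_assoc])]
  refine Finset.sum_eq_zero fun k hk => ?_
  have hk' : k ≠ m := by
    have := Finset.mem_range.mp hk
    omega
  rw [matIntegral_const_mul (fun i j => integrableOn_polyEval_mul hWint (P k) (P m) i j) _,
    horth k m hk', mul_zero]

end Ortho

/-! ### Vanishing moments implies vanishing a.e. -/

lemma ae_zero_of_forall_moment {a b : ℝ} {g : ℝ → ℂ}
    (hg : ∀ n : ℕ, IntegrableOn (fun x : ℝ => (x:ℂ)^n * g x) (Set.Ioo a b))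
    (h0 : ∀ n : ℕ, ∫ x in Set.Ioo a b, (x:ℂ)^n * g x = 0) :
    ∀ᵐ x ∂(volume.restrict (Set.Ioo a b)), g x = 0 := by
  have hgi : IntegrableOn g (Set.Ioo a b) := by simpa using hg 0
  have hfun : ∀ p : Polynomial ℝ, (fun x : ℝ => ((p.eval x : ℝ) : ℂ) * g x)
      = fun x : ℝ => ∑ k ∈ Finset.range (p.natDegree + 1),
          ((p.coeff k : ℝ) : ℂ) * ((x:ℂ)^k * g x) := by
    intro p
    funext x
    rw [Polynomial.eval_eq_sum_range]
    push_cast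
    rw [Finset.sum_mul]
    exact Finset.sum_congr rfl fun k _ => by ring
  have hpint : ∀ p : Polynomial ℝ,
      IntegrableOn (fun x : ℝ => ((p.eval x : ℝ) : ℂ) * g x) (Set.Ioo a b) := by
    intro p
    rw [hfun p]
    exact MeasureTheory.integrable_finset_sum _ (fun k _ => (hg k).const_mul _)
  have hp0 : ∀ p : Polynomial ℝ, ∫ x in Set.Ioo a b, ((p.eval x : ℝ) : ℂ) * g x = 0 := by
    intro p
    rw [hfun p, MeasureTheory.integral_finset_sum _ (fun k _ => (hg k).const_mul _)]
    refine Finset.sum_eq_zero fun k _ => ?_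
    rw [integral_const_mul, h0 k, mul_zero]
  set c : ℝ := ∫ x in Set.Ioo a b, ‖g x‖ with hc
  have hc0 : 0 ≤ c := integral_nonneg fun x => norm_nonneg _
  have key : ∀ᵐ x ∂(volume : Measure ℝ), (Set.Ioo a b).indicator g x = 0 := by
    have hfint : Integrable ((Set.Ioo a b).indicator g) :=
      (integrable_indicator_iff measurableSet_Ioo).2 hgi
    apply ae_eq_zero_of_integral_contDiff_smul_eq_zero hfint.locallyIntegrable
    intro φ hφ hφc
    have heq : (fun x : ℝ => φ x • (Set.Ioo a b).indicator g x)
        = (Set.Ioo a b).indicator (fun x => ((φ x : ℝ):ℂ) * g x) := by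
      funext x
      by_cases hx : x ∈ Set.Ioo a b
      · simp [Set.indicator_of_mem hx, Complex.real_smul]
      · simp [Set.indicator_of_notMem hx]
    rw [heq, integral_indicator measurableSet_Ioo]
    -- integrability of φ·g on Ioo
    obtain ⟨C, hC⟩ := hφc.exists_bound_of_continuous hφ.continuous
    have hintφ : IntegrableOn (fun x : ℝ => ((φ x : ℝ):ℂ) * g x) (Set.Ioo a b) := by
      refine hgi.bdd_mul (c := C) ?_ (ae_of_all _ fun x => ?_)
      · exact (Complex.continuous_ofReal.comp hφ.continuous).aestronglyMeasurable
      · simpa using hC x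
    -- ε-argument
    have hbound : ∀ ε : ℝ, 0 < ε → ‖∫ x in Set.Ioo a b, ((φ x : ℝ):ℂ) * g x‖ ≤ ε * c := by
      intro ε hε
      obtain ⟨p, hp⟩ := exists_polynomial_near_of_continuousOn a b φ
        hφ.continuous.continuousOn ε hε
      have hsub : (fun x : ℝ => (((φ x : ℝ):ℂ) - ((p.eval x : ℝ):ℂ)) * g x)
          = fun x : ℝ => ((φ x : ℝ):ℂ) * g x - ((p.eval x : ℝ):ℂ) * g x := by
        funext x; ring
      have hsint : IntegrableOn
          (fun x : ℝ => (((φ x : ℝ):ℂ) - ((p.eval x : ℝ):ℂ)) * g x) (Set.Ioo a b) := by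
        rw [hsub]; exact hintφ.sub (hpint p)
      have hIeq : ∫ x in Set.Ioo a b, ((φ x : ℝ):ℂ) * g x
          = ∫ x in Set.Ioo a b, (((φ x : ℝ):ℂ) - ((p.eval x : ℝ):ℂ)) * g x := by
        rw [hsub, integral_sub hintφ (hpint p), hp0 p, sub_zero]
      rw [hIeq]
      calc ‖∫ x in Set.Ioo a b, (((φ x : ℝ):ℂ) - ((p.eval x : ℝ):ℂ)) * g x‖
          ≤ ∫ x in Set.Ioo a b, ‖(((φ x : ℝ):ℂ) - ((p.eval x : ℝ):ℂ)) * g x‖ :=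
            norm_integral_le_integral_norm _
        _ ≤ ∫ x in Set.Ioo a b, ε * ‖g x‖ := by
            refine setIntegral_mono_on hsint.norm (hgi.norm.const_mul ε)
              measurableSet_Ioo fun x hx => ?_
            rw [norm_mul]
            refine mul_le_mul_of_nonneg_right ?_ (norm_nonneg _)
            rw [← Complex.ofReal_sub, Complex.norm_real]
            rw [Real.norm_eq_abs, abs_sub_comm]
            exact (hp x (Set.Ioo_subset_Icc_self hx)).le
        _ = ε * c := by rw [integral_const_mul]
    have : ‖∫ x in Set.Ioo a b, ((φ x : ℝ):ℂ) * g x‖ ≤ 0 := by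
      refine le_of_forall_pos_le_add fun δ hδ => ?_
      have h1 := hbound (δ / (c + 1)) (by positivity)
      have h2 : δ / (c + 1) * c ≤ δ := by
        rw [div_mul_eq_mul_div, div_le_iff₀ (by linarith)]
        nlinarith
      linarith
    simpa using norm_le_zero_iff.mp this
  have h1 : ∀ᵐ x ∂(volume.restrict (Set.Ioo a b)), (Set.Ioo a b).indicator g x = 0 :=
    ae_restrict_of_ae key
  filter_upwards [h1, ae_restrict_mem measurableSet_Ioo] with x hx1 hx2
  rwa [Set.indicator_of_mem hx2] at hx1

end S12

/-- For a matrix weight `W` on a finite interval with monic orthogonal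
polynomials `{P n}` and zeroth moment `M₀`, the set `C_ℝ(W)` coincides with
`{T : T M₀ = M₀ T* and T Pₙ(x) = Pₙ(x) T for all n, x}`. -/
theorem stmt_12 {N : ℕ} (a b : ℝ) (W : ℝ → Matrix (Fin N) (Fin N) ℂ)
    (hW : IsMatrixWeight (a : EReal) (b : EReal) W)
    (P : ℕ → Polynomial (Matrix (Fin N) (Fin N) ℂ))
    (hP : IsMonicOPS (a : EReal) (b : EReal) W P) :
    CR (a : EReal) (b : EReal) W =
      {T : Matrix (Fin N) (Fin N) ℂ |
        T * matIntegral (weightSupport (a : EReal) (b : EReal)) W =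
          matIntegral (weightSupport (a : EReal) (b : EReal)) W * Tᴴ ∧
        ∀ n : ℕ, ∀ x : ℝ, T * polyEval (P n) x = polyEval (P n) x * T} := by
  classical
  obtain ⟨hab', hpsd, hpos, hWint⟩ := hW
  obtain ⟨hmon, horth⟩ := hP
  simp only [S12.weightSupport_coe] at hpos hWint horth ⊢
  have hab : a < b := by exact_mod_cast hab'
  rcases Nat.eq_zero_or_pos N with hN | hN
  · subst hN
    haveI : Subsingleton (Matrix (Fin 0) (Fin 0) ℂ) :=
      ⟨fun M M' => by ext i j; exact i.elim0⟩
    ext T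
    simp only [CR, Set.mem_setOf_eq, S12.weightSupport_coe]
    constructor
    · intro _
      exact ⟨Subsingleton.elim _ _, fun n x => Subsingleton.elim _ _⟩
    · intro _
      exact Filter.Eventually.of_forall fun x => Subsingleton.elim _ _
  · have hW00 : ∀ i j, IntegrableOn (fun x : ℝ => W x i j) (Set.Ioo a b) := by
      intro i j
      simpa using hWint 0 i j
    ext T
    simp only [CR, Set.mem_setOf_eq, S12.weightSupport_coe]
    constructor
    · -- forward direction
      intro hT
      constructor
      · rw [← S12.matIntegral_const_mul hW00 T, ← S12.matIntegral_mul_const hW00 Tᴴ]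
        exact S12.matIntegral_congr_ae hT
      · intro n
        rcases Nat.eq_zero_or_pos n with hn | hn
        · subst hn
          intro x
          rw [S12.P0_eq_one hmon, S12.polyEval_one, mul_one, one_mul]
        · obtain ⟨m, rfl⟩ := Nat.exists_eq_succ_of_ne_zero (Nat.pos_iff_ne_zero.mp hn)
          set R : Polynomial (Matrix (Fin N) (Fin N) ℂ)
            := Polynomial.C T * P (m+1) - P (m+1) * Polynomial.C T with hR
          have hRdeg : R.natDegree ≤ m := by
            rw [Polynomial.natDegree_le_iff_coeff_eq_zero]
            intro k hk
            rw [hR, Polynomial.coeff_sub, Polynomial.coeff_C_mul, Polynomial.coeff_mul_C]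
            rcases eq_or_lt_of_le (Nat.succ_le_of_lt hk) with hk' | hk'
            · rw [← hk']
              have h1 : (P (m+1)).coeff (m+1) = 1 := by
                have := (hmon (m+1)).1.coeff_natDegree
                rwa [(hmon (m+1)).2] at this
              rw [h1, mul_one, one_mul, sub_self]
            · have h2 : (P (m+1)).coeff k = 0 :=
                Polynomial.coeff_eq_zero_of_natDegree_lt (by rw [(hmon (m+1)).2]; exact hk')
              rw [h2, mul_zero, zero_mul, sub_self]
          obtain ⟨A, hA⟩ := S12.expand_aux hmon m R hRdeg
          have hkey : ∀ l ∈ Finset.range (m+1), A l = 0 := by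
            intro l hl
            have hlm := Finset.mem_range.mp hl
            have hJ1 : matIntegral (Set.Ioo a b)
                (fun x => polyEval R x * W x * (polyEval (P l) x)ᴴ)
                = A l * matIntegral (Set.Ioo a b)
                    (fun x => polyEval (P l) x * W x * (polyEval (P l) x)ᴴ) := by
              have hfun : (fun x : ℝ => polyEval R x * W x * (polyEval (P l) x)ᴴ)
                  = fun x : ℝ => ∑ k ∈ Finset.range (m+1),
                      A k * (polyEval (P k) x * W x * (polyEval (P l) x)ᴴ) := by
                funext x
                conv_lhs => rw [hA]
                rw [S12.polyEval_finset_sum, Finset.sum_mul, Finset.sum_mul]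
                refine Finset.sum_congr rfl fun k hk => ?_
                simp only [S12.polyEval_C_mul, mul_assoc]
              rw [hfun, S12.matIntegral_finset_sum _ (fun k hk i j => by
                have h1 := S12.integrableOn_polyEval_mul hWint
                  (Polynomial.C (A k) * P k) (P l) i j
                refine h1.congr_fun ?_ measurableSet_Ioo
                intro x hx
                simp only [S12.polyEval_C_mul, mul_assoc])]
              have hterm : ∀ k, matIntegral (Set.Ioo a b)
                  (fun x => A k * (polyEval (P k) x * W x * (polyEval (P l) x)ᴴ))
                  = A k * matIntegral (Set.Ioo a b)
                      (fun x => polyEval (P k) x * W x * (polyEval (P l) x)ᴴ) :=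
                fun k => S12.matIntegral_const_mul
                  (fun i j => S12.integrableOn_polyEval_mul hWint (P k) (P l) i j) (A k)
              simp only [hterm]
              rw [Finset.sum_eq_single l]
              · intro k hk hkl
                rw [horth k l hkl, mul_zero]
              · intro hl'
                exact absurd hl hl'
            have hJ2 : matIntegral (Set.Ioo a b)
                (fun x => polyEval R x * W x * (polyEval (P l) x)ᴴ) = 0 := by
              have hae : ∀ᵐ x ∂(volume.restrict (Set.Ioo a b)),
                  polyEval R x * W x * (polyEval (P l) x)ᴴ
                  = T * (polyEval (P (m+1)) x * W x * (polyEval (P l) x)ᴴ)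
                    - polyEval (P (m+1)) x * W x
                        * (polyEval (P l * Polynomial.C T) x)ᴴ := by
                filter_upwards [hT] with x hx
                rw [hR, S12.polyEval_sub, S12.polyEval_C_mul, S12.polyEval_mul_C,
                  S12.polyEval_mul_C, Matrix.conjTranspose_mul, sub_mul, sub_mul]
                congr 1
                · simp only [mul_assoc]
                · rw [mul_assoc (polyEval (P (m+1)) x) T (W x), hx,
                    ← mul_assoc (polyEval (P (m+1)) x) (W x) Tᴴ,
                    mul_assoc (polyEval (P (m+1)) x * W x) Tᴴ (polyEval (P l) x)ᴴ]
              rw [S12.matIntegral_congr_ae hae]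
              have hint1 : ∀ i j, IntegrableOn (fun x : ℝ =>
                  ((T * (polyEval (P (m+1)) x * W x * (polyEval (P l) x)ᴴ)
                    : Matrix (Fin N) (Fin N) ℂ)) i j) (Set.Ioo a b) := by
                intro i j
                have h1 := S12.integrableOn_polyEval_mul hWint
                  (Polynomial.C T * P (m+1)) (P l) i j
                refine h1.congr_fun ?_ measurableSet_Ioo
                intro x hx
                simp only [S12.polyEval_C_mul, mul_assoc]
              have hint2 : ∀ i j, IntegrableOn (fun x : ℝ =>
                  ((polyEval (P (m+1)) x * W x * (polyEval (P l * Polynomial.C T) x)ᴴ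
                    : Matrix (Fin N) (Fin N) ℂ)) i j) (Set.Ioo a b) :=
                fun i j => S12.integrableOn_polyEval_mul hWint _ _ i j
              rw [S12.matIntegral_sub hint1 hint2,
                S12.matIntegral_const_mul
                  (fun i j => S12.integrableOn_polyEval_mul hWint (P (m+1)) (P l) i j) T,
                horth (m+1) l (by omega), mul_zero]
              have hdegq : (P l * Polynomial.C T).natDegree < m+1 := by
                have h1 := Polynomial.natDegree_mul_le (p := P l) (q := Polynomial.C T)
                simp only [(hmon l).2, Polynomial.natDegree_C, add_zero] at h1
                omega
              rw [S12.ortho_right hWint hmon horth (m+1) (P l * Polynomial.C T) hdegq,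
                sub_zero]
            have hJ : A l * matIntegral (Set.Ioo a b)
                (fun x => polyEval (P l) x * W x * (polyEval (P l) x)ᴴ) = 0 := by
              rw [← hJ1]; exact hJ2
            obtain ⟨u, hu⟩ := S12.isUnit_matIntegral_sq hab hpos hWint (hmon l).1
            have hinv : matIntegral (Set.Ioo a b)
                (fun x => polyEval (P l) x * W x * (polyEval (P l) x)ᴴ)
                * (↑u⁻¹ : Matrix (Fin N) (Fin N) ℂ) = 1 := by
              rw [← hu]
              exact u.mul_inv
            calc A l = A l * (matIntegral (Set.Ioo a b)
                  (fun x => polyEval (P l) x * W x * (polyEval (P l) x)ᴴ)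
                  * (↑u⁻¹ : Matrix (Fin N) (Fin N) ℂ)) := by rw [hinv, mul_one]
              _ = (A l * matIntegral (Set.Ioo a b)
                  (fun x => polyEval (P l) x * W x * (polyEval (P l) x)ᴴ))
                  * (↑u⁻¹ : Matrix (Fin N) (Fin N) ℂ) := by rw [mul_assoc]
              _ = 0 := by rw [hJ, zero_mul]
          have hR0 : R = 0 := by
            rw [hA]
            exact Finset.sum_eq_zero fun k hk => by rw [hkey k hk, map_zero, zero_mul]
          intro x
          have h2 : polyEval R x = 0 := by rw [hR0]; exact S12.polyEval_zero x
          rw [hR, S12.polyEval_sub, S12.polyEval_C_mul, S12.polyEval_mul_C] at h2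
          exact sub_eq_zero.mp h2
    · -- reverse direction
      rintro ⟨hM0, hcomm⟩
      set F : ℝ → Matrix (Fin N) (Fin N) ℂ := fun x => T * W x - W x * Tᴴ with hF
      have hPWint : ∀ (r : Polynomial (Matrix (Fin N) (Fin N) ℂ))
          (B : Matrix (Fin N) (Fin N) ℂ) (i j : Fin N),
          IntegrableOn (fun x : ℝ => ((polyEval r x * W x * B
            : Matrix (Fin N) (Fin N) ℂ)) i j) (Set.Ioo a b) := by
        intro r B i j
        have h1 := S12.integrableOn_polyEval_mul hWint r (Polynomial.C Bᴴ) i j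
        refine h1.congr_fun ?_ measurableSet_Ioo
        intro x hx
        simp [S12.polyEval_C]
      have hFint : ∀ (k : ℕ) (i j : Fin N),
          IntegrableOn (fun x : ℝ => (x:ℂ)^k * F x i j) (Set.Ioo a b) := by
        intro k i j
        have h1 := S12.integrableOn_smul_mul_mul hWint k T 1 i j
        have h2 := S12.integrableOn_smul_mul_mul hWint k 1 Tᴴ i j
        have h3 : IntegrableOn (fun x : ℝ =>
            (((x:ℂ)^k • (T * W x * 1) : Matrix (Fin N) (Fin N) ℂ)) i j
            - (((x:ℂ)^k • (1 * W x * Tᴴ) : Matrix (Fin N) (Fin N) ℂ)) i j)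
            (Set.Ioo a b) := h1.sub h2
        refine h3.congr_fun ?_ measurableSet_Ioo
        intro x hx
        simp [hF, Matrix.smul_apply, smul_eq_mul, Matrix.sub_apply, mul_sub]
      have hP0 : P 0 = 1 := S12.P0_eq_one hmon
      have hPl0 : ∀ l : ℕ, l ≠ 0 →
          matIntegral (Set.Ioo a b) (fun x => polyEval (P l) x * W x) = 0 := by
        intro l hl
        have h1 := horth l 0 hl
        rw [hP0] at h1
        simpa [S12.polyEval_one, Matrix.conjTranspose_one, mul_one] using h1
      have hintPW : ∀ (l : ℕ) (i j : Fin N), IntegrableOn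
          (fun x : ℝ => ((polyEval (P l) x * W x : Matrix (Fin N) (Fin N) ℂ)) i j)
          (Set.Ioo a b) := by
        intro l i j
        have h1 := hPWint (P l) 1 i j
        refine h1.congr_fun ?_ measurableSet_Ioo
        intro x hx
        simp
      have hkey : ∀ l : ℕ,
          matIntegral (Set.Ioo a b) (fun x => polyEval (P l) x * F x) = 0 := by
        intro l
        have hfun : (fun x : ℝ => polyEval (P l) x * F x)
            = fun x : ℝ => T * (polyEval (P l) x * W x)
                - (polyEval (P l) x * W x) * Tᴴ := by
          funext x
          rw [hF, mul_sub]
          congr 1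
          · rw [← mul_assoc, ← hcomm l x, mul_assoc]
          · rw [← mul_assoc]
        have hint1 : ∀ i j, IntegrableOn (fun x : ℝ =>
            ((T * (polyEval (P l) x * W x) : Matrix (Fin N) (Fin N) ℂ)) i j)
            (Set.Ioo a b) :=
          S12.integrableOn_const_mul_mat (hintPW l) T
        have hint2 : ∀ i j, IntegrableOn (fun x : ℝ =>
            (((polyEval (P l) x * W x) * Tᴴ : Matrix (Fin N) (Fin N) ℂ)) i j)
            (Set.Ioo a b) := fun i j => hPWint (P l) Tᴴ i j
        rw [hfun, S12.matIntegral_sub hint1 hint2,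
          S12.matIntegral_const_mul (hintPW l) T, S12.matIntegral_mul_const (hintPW l) Tᴴ]
        rcases eq_or_ne l 0 with hl | hl
        · subst hl
          have hMW : matIntegral (Set.Ioo a b) (fun x => polyEval (P 0) x * W x)
              = matIntegral (Set.Ioo a b) W := by
            refine S12.matIntegral_congr_ae (Filter.Eventually.of_forall fun x => ?_)
            rw [hP0, S12.polyEval_one, one_mul]
          rw [hMW, hM0, sub_self]
        · rw [hPl0 l hl, mul_zero, zero_mul, sub_self]
      have hintPF : ∀ (l : ℕ) (i j : Fin N), IntegrableOn
          (fun x : ℝ => ((polyEval (P l) x * F x : Matrix (Fin N) (Fin N) ℂ)) i j)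
          (Set.Ioo a b) := by
        intro l i j
        have h1 := hPWint (P l * Polynomial.C T) 1 i j
        have h2 := hPWint (P l) Tᴴ i j
        have h3 : IntegrableOn (fun x : ℝ =>
            ((polyEval (P l * Polynomial.C T) x * W x * 1 : Matrix (Fin N) (Fin N) ℂ)) i j
            - ((polyEval (P l) x * W x * Tᴴ : Matrix (Fin N) (Fin N) ℂ)) i j)
            (Set.Ioo a b) := h1.sub h2
        refine h3.congr_fun ?_ measurableSet_Ioo
        intro x hx
        have hmel : polyEval (P l) x * F x
            = polyEval (P l * Polynomial.C T) x * W x * 1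
              - polyEval (P l) x * W x * Tᴴ := by
          rw [S12.polyEval_mul_C, mul_one, hF, mul_sub, ← mul_assoc, ← mul_assoc]
        simp only [hmel, Matrix.sub_apply]
      have hmom : ∀ (k : ℕ) (i j : Fin N),
          ∫ x in Set.Ioo a b, (x:ℂ)^k * F x i j = 0 := by
        intro k i j
        obtain ⟨A, hA⟩ := S12.expand_aux hmon k
          (Polynomial.monomial k (1 : Matrix (Fin N) (Fin N) ℂ))
          (Polynomial.natDegree_monomial_le 1)
        have hxk : ∀ x : ℝ, ((x:ℂ)^k • (1 : Matrix (Fin N) (Fin N) ℂ))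
            = ∑ l ∈ Finset.range (k+1), A l * polyEval (P l) x := by
          intro x
          rw [← S12.polyEval_monomial k 1 x]
          conv_lhs => rw [hA]
          rw [S12.polyEval_finset_sum]
          exact Finset.sum_congr rfl fun l _ => S12.polyEval_C_mul _ _ _
        have hfun : (fun x : ℝ => ((x:ℂ)^k • F x : Matrix (Fin N) (Fin N) ℂ))
            = fun x : ℝ => ∑ l ∈ Finset.range (k+1),
                A l * (polyEval (P l) x * F x) := by
          funext x
          calc ((x:ℂ)^k • F x : Matrix (Fin N) (Fin N) ℂ)
              = ((x:ℂ)^k • (1 : Matrix (Fin N) (Fin N) ℂ)) * F x := by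
                rw [smul_mul_assoc, one_mul]
            _ = (∑ l ∈ Finset.range (k+1), A l * polyEval (P l) x) * F x := by rw [hxk]
            _ = ∑ l ∈ Finset.range (k+1), A l * (polyEval (P l) x * F x) := by
                rw [Finset.sum_mul]
                exact Finset.sum_congr rfl fun l _ => by rw [mul_assoc]
        have hmz : matIntegral (Set.Ioo a b)
            (fun x => ((x:ℂ)^k • F x : Matrix (Fin N) (Fin N) ℂ)) = 0 := by
          rw [hfun, S12.matIntegral_finset_sum _ (fun l _ =>
            S12.integrableOn_const_mul_mat (hintPF l) (A l))]
          refine Finset.sum_eq_zero fun l _ => ?_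
          rw [S12.matIntegral_const_mul (hintPF l) (A l), hkey l, mul_zero]
        have hentry := congrArg (fun M : Matrix (Fin N) (Fin N) ℂ => M i j) hmz
        simp only [matIntegral, Matrix.of_apply, Matrix.zero_apply] at hentry
        calc ∫ x in Set.Ioo a b, (x:ℂ)^k * F x i j
            = ∫ x in Set.Ioo a b, ((x:ℂ)^k • F x : Matrix (Fin N) (Fin N) ℂ) i j := by
              refine integral_congr_ae (Filter.Eventually.of_forall fun x => ?_)
              simp [Matrix.smul_apply, smul_eq_mul]
          _ = 0 := hentry
      have hae : ∀ i j : Fin N,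
          ∀ᵐ x ∂(volume.restrict (Set.Ioo a b)), F x i j = 0 := fun i j =>
        S12.ae_zero_of_forall_moment (fun k => hFint k i j) (fun k => hmom k i j)
      have hall : ∀ᵐ x ∂(volume.restrict (Set.Ioo a b)), ∀ i : Fin N, ∀ j : Fin N,
          F x i j = 0 := by
        rw [MeasureTheory.ae_all_iff]
        intro i
        rw [MeasureTheory.ae_all_iff]
        exact hae i
      filter_upwards [hall] with x hx
      have hFx : F x = 0 := by
        ext i j
        simpa using hx i j
      rw [hF] at hFx
      exact sub_eq_zero.mp hFx
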